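/- Let M be an infinite complete pointed metric space. Then SNA(M) contains a linear subspace of Lip_0(M) isomorphic to c_0; that is, there is a bounded linear operator T : c_0 → Lip_0(M) which is an isomorphism onto its range such that every function in T(c_0) strongly attains its Lipschitz norm. -/

import Mathlib

open Metric Set Filter Topology ZeroAtInfty

/-- The Lipschitz norm (best Lipschitz constant, as a supremum of difference quotients). -/
noncomputable def lipNorm {M : Type*} [MetricSpace M] (f : M → ℝ) : ℝ :=
  sSup {r : ℝ | ∃ x y : M, x ≠ y ∧ r = |f x - f y| / dist x y}

/-- `f` strongly attains its Lipschitz norm. -/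
def StronglyAttains {M : Type*} [MetricSpace M] (f : M → ℝ) : Prop :=
  ∃ x y : M, x ≠ y ∧ (f x - f y) / dist x y = lipNorm f

/-- `f` is Lipschitz with (real) constant `K`. -/
def IsLipWith {M : Type*} [MetricSpace M] (K : ℝ) (f : M → ℝ) : Prop :=
  ∀ x y : M, |f x - f y| ≤ K * dist x y

/-- Distance between two subsets of a metric space. -/
noncomputable def setDist {M : Type*} [MetricSpace M] (A B : Set M) : ℝ :=
  sInf {r : ℝ | ∃ a ∈ A, ∃ b ∈ B, r = dist a b}

/-- A subset is uniformly discrete. -/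
def UnifDiscreteOn {M : Type*} [MetricSpace M] (s : Set M) : Prop :=
  ∃ r > 0, ∀ x ∈ s, ∀ y ∈ s, x ≠ y → r ≤ dist x y

/-- `R(x)`: the supremum of radii `R ≥ 0` with `closedBall x R = {x}`. -/
noncomputable def isolRad {M : Type*} [MetricSpace M] (x : M) : ℝ :=
  sSup {R : ℝ | 0 ≤ R ∧ Metric.closedBall x R = {x}}

section lipnorm
variable {M : Type*} [MetricSpace M]

def Qs (g : M → ℝ) : Set ℝ := {r : ℝ | ∃ x y : M, x ≠ y ∧ r = |g x - g y| / dist x y}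

lemma lipNorm_eq_sSup (g : M → ℝ) : lipNorm g = sSup (Qs g) := rfl

lemma Qs_nonempty [Nontrivial M] (g : M → ℝ) : (Qs g).Nonempty := by
  obtain ⟨x, y, h⟩ := exists_pair_ne M
  exact ⟨_, x, y, h, rfl⟩

lemma Qs_ub {g : M → ℝ} {L : ℝ} (hL : ∀ x y : M, |g x - g y| ≤ L * dist x y) :
    ∀ r ∈ Qs g, r ≤ L := by
  rintro r ⟨x, y, hxy, rfl⟩
  rw [div_le_iff₀ (dist_pos.2 hxy)]
  exact hL x y

lemma mem_Qs {g : M → ℝ} {x y : M} (h : x ≠ y) : |g x - g y| / dist x y ∈ Qs g :=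
  ⟨x, y, h, rfl⟩

lemma lipNorm_le [Nontrivial M] {g : M → ℝ} {L : ℝ}
    (hL : ∀ x y : M, |g x - g y| ≤ L * dist x y) : lipNorm g ≤ L :=
  csSup_le (Qs_nonempty g) (Qs_ub hL)

lemma le_lipNorm {g : M → ℝ} {L : ℝ} (hL : ∀ x y : M, |g x - g y| ≤ L * dist x y)
    {x y : M} (h : x ≠ y) : |g x - g y| / dist x y ≤ lipNorm g :=
  le_csSup ⟨L, Qs_ub hL⟩ (mem_Qs h)

lemma attains_of {g : M → ℝ} {x y : M} (hxy : x ≠ y)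
    (h : |g x - g y| / dist x y = lipNorm g) : StronglyAttains g := by
  rcases le_or_gt 0 (g x - g y) with hs | hs
  · exact ⟨x, y, hxy, by rwa [abs_of_nonneg hs] at h⟩
  · refine ⟨y, x, hxy.symm, ?_⟩
    rw [dist_comm x y] at h
    rwa [abs_of_neg hs, neg_sub] at h

lemma Qs_shift (g : M → ℝ) (z : M) : Qs (fun x => g x - g z) = Qs g := by
  unfold Qs
  ext r
  constructor <;> rintro ⟨x, y, h, rfl⟩ <;> refine ⟨x, y, h, by ring_nf⟩

end lipnorm

section c0
lemma c0_abs_le (v : C₀(ℕ, ℝ)) (n : ℕ) : |v n| ≤ ‖v‖ := by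
  rw [← ZeroAtInftyContinuousMap.norm_toBCF_eq_norm]
  simpa using v.toBCF.norm_coe_le_norm n

lemma c0_tail (v : C₀(ℕ, ℝ)) {η : ℝ} (hη : 0 < η) : ∃ K, ∀ n, K ≤ n → |v n| ≤ η := by
  have h := v.zero_at_infty'
  rw [cocompact_eq_atTop, Metric.tendsto_atTop] at h
  obtain ⟨K, hK⟩ := h η hη
  exact ⟨K, fun n hn => by simpa [Real.dist_eq] using (hK n hn).le⟩

lemma c0_norm_le (v : C₀(ℕ, ℝ)) {C : ℝ} (hC : 0 ≤ C) (h : ∀ n, |v n| ≤ C) : ‖v‖ ≤ C := by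
  rw [← ZeroAtInftyContinuousMap.norm_toBCF_eq_norm]
  exact BoundedContinuousFunction.norm_le hC |>.mpr (by simpa using h)

lemma c0_attain (v : C₀(ℕ, ℝ)) (hv : v ≠ 0) : ∃ N, |v N| = ‖v‖ := by
  have hn : 0 < ‖v‖ := norm_pos_iff.mpr hv
  obtain ⟨K, hK⟩ := c0_tail v (half_pos hn)
  by_cases hK0 : K = 0
  · exfalso
    have : ‖v‖ ≤ ‖v‖ / 2 := c0_norm_le v (by positivity) (fun n => hK n (by omega))
    linarith
  · obtain ⟨N, hN, hmax⟩ := Finset.exists_max_image (Finset.range K) (fun n => |v n|)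
      ⟨0, by simp [Nat.pos_of_ne_zero hK0]⟩
    refine ⟨N, le_antisymm (c0_abs_le v N) ?_⟩
    have h2 : ‖v‖ ≤ max (|v N|) (‖v‖ / 2) := by
      refine c0_norm_le v (le_max_of_le_right (by positivity)) (fun n => ?_)
      by_cases h : n < K
      · exact le_max_of_le_left (hmax n (by simpa using h))
      · exact le_max_of_le_right (hK n (by omega))
    rcases max_cases (|v N|) (‖v‖ / 2) with ⟨he, _⟩ | ⟨he, _⟩ <;> rw [he] at h2 <;> linarith
end c0

section gadget
variable {M : Type*} [MetricSpace M]

structure Gadget (M : Type*) [MetricSpace M] where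
  f : ℕ → M → ℝ
  P : ℕ → M
  Q : ℕ → M
  uniq : ∀ x n m, f n x ≠ 0 → f m x ≠ 0 → n = m
  lip1 : ∀ n (x y : M), |f n x - f n y| ≤ dist x y
  van : ∀ n (x y : M), f n y = 0 → |f n x| ≤ dist x y
  hPQ : ∀ n, P n ≠ Q n
  desig : ∀ n, f n (P n) - f n (Q n) = dist (P n) (Q n)
  Pact : ∀ n, f n (P n) ≠ 0
  Qother : ∀ n m, n ≠ m → f m (Q n) = 0
  Pother : ∀ n m, n ≠ m → f m (P n) = 0
  fin : (∀ n m (x y : M), n ≠ m → f n x ≠ 0 → f m y ≠ 0 → |f n x| + |f m y| ≤ dist x y) ∨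
        (∀ n, {x : M | f n x ≠ 0}.Finite)

variable (G : Gadget M)

open Classical in
noncomputable def Gadget.Fv (v : C₀(ℕ, ℝ)) (x : M) : ℝ :=
  if h : ∃ n, G.f n x ≠ 0 then v h.choose * G.f h.choose x else 0

lemma Gadget.Fv_inactive {v : C₀(ℕ, ℝ)} {x : M} (h : ∀ n, G.f n x = 0) : G.Fv v x = 0 := by
  rw [Gadget.Fv, dif_neg]
  push_neg
  exact h

lemma Gadget.Fv_active {v : C₀(ℕ, ℝ)} {x : M} {n : ℕ} (h : G.f n x ≠ 0) :
    G.Fv v x = v n * G.f n x := by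
  have he : ∃ n, G.f n x ≠ 0 := ⟨n, h⟩
  rw [Gadget.Fv, dif_pos he]
  rw [G.uniq x he.choose n he.choose_spec h]

lemma Gadget.Fv_add (u v : C₀(ℕ, ℝ)) (x : M) : G.Fv (u + v) x = G.Fv u x + G.Fv v x := by
  rw [Gadget.Fv, Gadget.Fv, Gadget.Fv]
  split_ifs with h
  · have : (u + v) h.choose = u h.choose + v h.choose := rfl
    rw [this]; ring
  · ring

lemma Gadget.Fv_smul (c : ℝ) (v : C₀(ℕ, ℝ)) (x : M) : G.Fv (c • v) x = c * G.Fv v x := by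
  rw [Gadget.Fv, Gadget.Fv]
  split_ifs with h
  · have : (c • v) h.choose = c * v h.choose := rfl
    rw [this]; ring
  · ring
end gadget

section gadget2
variable {M : Type*} [MetricSpace M] (G : Gadget M)

lemma Gadget.Fv_zero (x : M) : G.Fv (0 : C₀(ℕ, ℝ)) x = 0 := by
  rw [Gadget.Fv]
  split_ifs with h
  · show (0 : C₀(ℕ, ℝ)) h.choose * _ = 0
    have : (0 : C₀(ℕ, ℝ)) h.choose = 0 := rfl
    rw [this, zero_mul]
  · rfl

lemma Gadget.pairbound2 (v : C₀(ℕ, ℝ)) (x y : M) :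
    |G.Fv v x - G.Fv v y| ≤ 2 * ‖v‖ * dist x y := by
  have hv : (0:ℝ) ≤ ‖v‖ := norm_nonneg v
  have hdn : (0:ℝ) ≤ dist x y := dist_nonneg
  rcases em (∃ n, G.f n x ≠ 0) with ⟨n, hn⟩ | hx
  · rcases em (∃ m, G.f m y ≠ 0) with ⟨m, hm⟩ | hy
    · rcases em (n = m) with rfl | hnm
      · rw [G.Fv_active hn, G.Fv_active hm, ← mul_sub, abs_mul]
        have := G.lip1 n x y
        have := c0_abs_le v n
        nlinarith [abs_nonneg (G.f n x - G.f n y), abs_nonneg (v n)]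
      · rw [G.Fv_active hn, G.Fv_active hm]
        have hny : G.f n y = 0 := by
          by_contra h
          exact hnm (G.uniq y n m h hm)
        have hmx : G.f m x = 0 := by
          by_contra h
          exact hnm (G.uniq x n m hn h)
        have h1 : |G.f n x| ≤ dist x y := G.van n x y hny
        have h2 : |G.f m y| ≤ dist x y := by
          have := G.van m y x hmx
          rwa [dist_comm] at this
        calc |v n * G.f n x - v m * G.f m y| ≤ |v n * G.f n x| + |v m * G.f m y| :=
              abs_sub _ _
          _ = |v n| * |G.f n x| + |v m| * |G.f m y| := by rw [abs_mul, abs_mul]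
          _ ≤ 2 * ‖v‖ * dist x y := by
              have := c0_abs_le v n
              have := c0_abs_le v m
              nlinarith [abs_nonneg (G.f n x), abs_nonneg (G.f m y), abs_nonneg (v n),
                abs_nonneg (v m)]
    · push_neg at hy
      rw [G.Fv_inactive hy, sub_zero, G.Fv_active hn, abs_mul]
      have h1 : |G.f n x| ≤ dist x y := G.van n x y (hy n)
      have := c0_abs_le v n
      nlinarith [abs_nonneg (G.f n x), abs_nonneg (v n)]
  · push_neg at hx
    rw [G.Fv_inactive hx, zero_sub, abs_neg]
    rcases em (∃ m, G.f m y ≠ 0) with ⟨m, hm⟩ | hy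
    · rw [G.Fv_active hm, abs_mul]
      have h1 : |G.f m y| ≤ dist x y := by
        have := G.van m y x (hx m)
        rwa [dist_comm] at this
      have := c0_abs_le v m
      nlinarith [abs_nonneg (G.f m y), abs_nonneg (v m)]
    · push_neg at hy
      rw [G.Fv_inactive hy]
      simpa using by positivity

lemma Gadget.pairboundW
    (hE1 : ∀ n m (x y : M), n ≠ m → G.f n x ≠ 0 → G.f m y ≠ 0 →
      |G.f n x| + |G.f m y| ≤ dist x y)
    (v : C₀(ℕ, ℝ)) (x y : M) : |G.Fv v x - G.Fv v y| ≤ ‖v‖ * dist x y := by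
  have hv : (0:ℝ) ≤ ‖v‖ := norm_nonneg v
  have hdn : (0:ℝ) ≤ dist x y := dist_nonneg
  rcases em (∃ n, G.f n x ≠ 0) with ⟨n, hn⟩ | hx
  · rcases em (∃ m, G.f m y ≠ 0) with ⟨m, hm⟩ | hy
    · rcases em (n = m) with rfl | hnm
      · rw [G.Fv_active hn, G.Fv_active hm, ← mul_sub, abs_mul]
        have := G.lip1 n x y
        have := c0_abs_le v n
        nlinarith [abs_nonneg (G.f n x - G.f n y), abs_nonneg (v n)]
      · rw [G.Fv_active hn, G.Fv_active hm]
        have h1 : |G.f n x| + |G.f m y| ≤ dist x y := hE1 n m x y hnm hn hm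
        calc |v n * G.f n x - v m * G.f m y| ≤ |v n * G.f n x| + |v m * G.f m y| :=
              abs_sub _ _
          _ = |v n| * |G.f n x| + |v m| * |G.f m y| := by rw [abs_mul, abs_mul]
          _ ≤ ‖v‖ * dist x y := by
              have := c0_abs_le v n
              have := c0_abs_le v m
              nlinarith [abs_nonneg (G.f n x), abs_nonneg (G.f m y), abs_nonneg (v n),
                abs_nonneg (v m)]
    · push_neg at hy
      rw [G.Fv_inactive hy, sub_zero, G.Fv_active hn, abs_mul]
      have h1 : |G.f n x| ≤ dist x y := G.van n x y (hy n)
      have := c0_abs_le v n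
      nlinarith [abs_nonneg (G.f n x), abs_nonneg (v n)]
  · push_neg at hx
    rw [G.Fv_inactive hx, zero_sub, abs_neg]
    rcases em (∃ m, G.f m y ≠ 0) with ⟨m, hm⟩ | hy
    · rw [G.Fv_active hm, abs_mul]
      have h1 : |G.f m y| ≤ dist x y := by
        have := G.van m y x (hx m)
        rwa [dist_comm] at this
      have := c0_abs_le v m
      nlinarith [abs_nonneg (G.f m y), abs_nonneg (v m)]
    · push_neg at hy
      rw [G.Fv_inactive hy]
      simpa using by positivity
end gadget2

section gadget3
variable {M : Type*} [MetricSpace M] (G : Gadget M)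

lemma Gadget.pairbound_eta (v : C₀(ℕ, ℝ)) (x y : M) (K : ℕ) {η : ℝ} (hη : 0 ≤ η)
    (htail : ∀ n, K ≤ n → |v n| ≤ η)
    (hside : (∀ n, n < K → G.f n x = 0) ∨ (∀ n, n < K → G.f n y = 0)) :
    |G.Fv v x - G.Fv v y| ≤ (‖v‖ + η) * dist x y := by
  have hv : (0:ℝ) ≤ ‖v‖ := norm_nonneg v
  have hdn : (0:ℝ) ≤ dist x y := dist_nonneg
  rcases em (∃ n, G.f n x ≠ 0) with ⟨n, hn⟩ | hx
  · rcases em (∃ m, G.f m y ≠ 0) with ⟨m, hm⟩ | hy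
    · rcases em (n = m) with rfl | hnm
      · -- both active with same index; that index is ≥ K on one side
        have hsm : |v n| ≤ η := by
          rcases hside with h | h
          · exact htail n (by by_contra hc; exact hn (h n (by omega)))
          · exact htail n (by by_contra hc; exact hm (h n (by omega)))
        rw [G.Fv_active hn, G.Fv_active hm, ← mul_sub, abs_mul]
        have := G.lip1 n x y
        nlinarith [abs_nonneg (G.f n x - G.f n y), abs_nonneg (v n)]
      · rw [G.Fv_active hn, G.Fv_active hm]
        have hny : G.f n y = 0 := by by_contra h; exact hnm (G.uniq y n m h hm)
        have hmx : G.f m x = 0 := by by_contra h; exact hnm (G.uniq x n m hn h)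
        have h1 : |G.f n x| ≤ dist x y := G.van n x y hny
        have h2 : |G.f m y| ≤ dist x y := by
          have := G.van m y x hmx; rwa [dist_comm] at this
        have hbound : |v n| * |G.f n x| + |v m| * |G.f m y| ≤ (‖v‖ + η) * dist x y := by
          rcases hside with h | h
          · have hnK : |v n| ≤ η := htail n (by by_contra hc; exact hn (h n (by omega)))
            have := c0_abs_le v m
            nlinarith [abs_nonneg (G.f n x), abs_nonneg (G.f m y), abs_nonneg (v n),
              abs_nonneg (v m)]
          · have hmK : |v m| ≤ η := htail m (by by_contra hc; exact hm (h m (by omega)))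
            have := c0_abs_le v n
            nlinarith [abs_nonneg (G.f n x), abs_nonneg (G.f m y), abs_nonneg (v n),
              abs_nonneg (v m)]
        calc |v n * G.f n x - v m * G.f m y| ≤ |v n * G.f n x| + |v m * G.f m y| :=
              abs_sub _ _
          _ = |v n| * |G.f n x| + |v m| * |G.f m y| := by rw [abs_mul, abs_mul]
          _ ≤ (‖v‖ + η) * dist x y := hbound
    · push_neg at hy
      rw [G.Fv_inactive hy, sub_zero, G.Fv_active hn, abs_mul]
      have h1 : |G.f n x| ≤ dist x y := G.van n x y (hy n)
      have := c0_abs_le v n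
      nlinarith [abs_nonneg (G.f n x), abs_nonneg (v n)]
  · push_neg at hx
    rw [G.Fv_inactive hx, zero_sub, abs_neg]
    rcases em (∃ m, G.f m y ≠ 0) with ⟨m, hm⟩ | hy
    · rw [G.Fv_active hm, abs_mul]
      have h1 : |G.f m y| ≤ dist x y := by
        have := G.van m y x (hx m); rwa [dist_comm] at this
      have := c0_abs_le v m
      nlinarith [abs_nonneg (G.f m y), abs_nonneg (v m)]
    · push_neg at hy
      rw [G.Fv_inactive hy]
      simpa using by positivity

lemma Gadget.desig_diff (v : C₀(ℕ, ℝ)) (N : ℕ) :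
    G.Fv v (G.P N) - G.Fv v (G.Q N) = v N * dist (G.P N) (G.Q N) := by
  have hP : G.Fv v (G.P N) = v N * G.f N (G.P N) := G.Fv_active (G.Pact N)
  have hQ : G.Fv v (G.Q N) = v N * G.f N (G.Q N) := by
    by_cases h : G.f N (G.Q N) = 0
    · rw [G.Fv_inactive, h, mul_zero]
      intro m
      by_cases hm : m = N
      · rwa [hm]
      · exact G.Qother N m (fun he => hm he.symm)
    · exact G.Fv_active h
  rw [hP, hQ, ← mul_sub, G.desig]
end gadget3

section gadgetmain
variable {M : Type*} [MetricSpace M]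

theorem Gadget.stmt [Infinite M] (G : Gadget M) (z : M) :
    ∃ (T : C₀(ℕ, ℝ) →ₗ[ℝ] (M → ℝ)) (c C : ℝ), 0 < c ∧ 0 < C ∧
      ∀ v : C₀(ℕ, ℝ),
        T v z = 0 ∧
        IsLipWith (C * ‖v‖) (T v) ∧
        c * ‖v‖ ≤ lipNorm (T v) ∧ lipNorm (T v) ≤ C * ‖v‖ ∧
        StronglyAttains (T v) := by
  haveI : Nontrivial M := Infinite.instNontrivial M
  refine ⟨{ toFun := fun v => fun x => G.Fv v x - G.Fv v z
            map_add' := fun u v => by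
              funext x
              simp only [Pi.add_apply, G.Fv_add]
              ring
            map_smul' := fun c v => by
              funext x
              simp only [G.Fv_smul, RingHom.id_apply, Pi.smul_apply, smul_eq_mul]
              ring }, 1, 2, one_pos, two_pos, fun v => ?_⟩
  show (fun x => G.Fv v x - G.Fv v z) z = 0 ∧
    IsLipWith (2 * ‖v‖) (fun x => G.Fv v x - G.Fv v z) ∧
    1 * ‖v‖ ≤ lipNorm (fun x => G.Fv v x - G.Fv v z) ∧
    lipNorm (fun x => G.Fv v x - G.Fv v z) ≤ 2 * ‖v‖ ∧
    StronglyAttains (fun x => G.Fv v x - G.Fv v z)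
  set T : M → ℝ := fun x => G.Fv v x - G.Fv v z with hTdef
  have hdiff : ∀ x y : M, T x - T y = G.Fv v x - G.Fv v y := fun x y => by
    show (G.Fv v x - G.Fv v z) - (G.Fv v y - G.Fv v z) = _
    ring
  have hlip2 : ∀ x y : M, |T x - T y| ≤ 2 * ‖v‖ * dist x y := fun x y => by
    rw [hdiff]; exact G.pairbound2 v x y
  have hlipN : lipNorm T ≤ 2 * ‖v‖ := lipNorm_le hlip2
  have hdesig : ∀ N : ℕ, T (G.P N) - T (G.Q N) = v N * dist (G.P N) (G.Q N) := fun N => by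
    rw [hdiff]; exact G.desig_diff v N
  have hlower : ‖v‖ ≤ lipNorm T := by
    by_cases hv : v = 0
    · subst hv
      rw [norm_zero]
      obtain ⟨x, y, hxy⟩ := exists_pair_ne M
      have h0 : |T x - T y| / dist x y ≤ lipNorm T := le_lipNorm hlip2 hxy
      have : (0:ℝ) ≤ |T x - T y| / dist x y := by positivity
      linarith
    · obtain ⟨N, hN⟩ := c0_attain v hv
      have hPQ := G.hPQ N
      have hval : |T (G.P N) - T (G.Q N)| / dist (G.P N) (G.Q N) = ‖v‖ := by
        rw [hdesig N, abs_mul, abs_dist,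
          mul_div_assoc, div_self (ne_of_gt (dist_pos.2 hPQ)), mul_one, hN]
      have := le_lipNorm hlip2 hPQ
      rwa [hval] at this
  refine ⟨sub_self _, fun x y => hlip2 x y, by rw [one_mul]; exact hlower, hlipN, ?_⟩
  by_cases hv : v = 0
  · subst hv
    obtain ⟨x, y, hxy⟩ := exists_pair_ne M
    refine attains_of hxy ?_
    have h1 : lipNorm T ≤ 0 := by
      refine lipNorm_le (fun x y => ?_)
      rw [hdiff, G.Fv_zero, G.Fv_zero]
      simp
    have h2 : (0:ℝ) ≤ lipNorm T := by
      have h0 : |T x - T y| / dist x y ≤ lipNorm T := le_lipNorm hlip2 hxy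
      have : (0:ℝ) ≤ |T x - T y| / dist x y := by positivity
      linarith
    have hT0 : ∀ a : M, T a = 0 := fun a => by
      show G.Fv 0 a - G.Fv 0 z = 0
      rw [G.Fv_zero, G.Fv_zero, sub_self]
    rw [hT0 x, hT0 y]
    simp [le_antisymm h1 h2]
  · obtain ⟨N, hN⟩ := c0_attain v hv
    have hPQ := G.hPQ N
    have hval : |T (G.P N) - T (G.Q N)| / dist (G.P N) (G.Q N) = ‖v‖ := by
      rw [hdesig N, abs_mul, abs_dist,
        mul_div_assoc, div_self (ne_of_gt (dist_pos.2 hPQ)), mul_one, hN]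
    rcases G.fin with hE1 | hfin
    · have hle : lipNorm T ≤ ‖v‖ := by
        refine lipNorm_le (fun x y => ?_)
        rw [hdiff]
        exact G.pairboundW hE1 v x y
      exact attains_of hPQ (by rw [hval]; exact le_antisymm hlower hle)
    · by_cases hL : lipNorm T ≤ ‖v‖
      · exact attains_of hPQ (by rw [hval]; exact le_antisymm hlower hL)
      · push_neg at hL
        set L := lipNorm T with hLdef
        set η := (L - ‖v‖) / 2 with hetadef
        have hη : 0 < η := by
          have : L - ‖v‖ > 0 := by linarith
          positivity
        obtain ⟨K, hK⟩ := c0_tail v hη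
        set Pts : Set M := ⋃ n ∈ Finset.range K, {x : M | G.f n x ≠ 0} with hPtsdef
        have hPtsFin : Pts.Finite :=
          Set.Finite.biUnion (Finset.range K).finite_toSet (fun n _ => hfin n)
        have hPtsmem : ∀ x : M, x ∉ Pts → ∀ n, n < K → G.f n x = 0 := by
          intro x hx n hn
          by_contra h
          exact hx (Set.mem_biUnion (Finset.mem_coe.mpr (Finset.mem_range.mpr hn)) h)
        have hclaim : ∀ r ∈ Qs T, ‖v‖ + η < r →
            r ∈ (fun p : M × M => |T p.1 - T p.2| / dist p.1 p.2) '' (Pts ×ˢ Pts) := by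
          rintro r ⟨x, y, hxy, rfl⟩ hr
          rw [lt_div_iff₀ (dist_pos.2 hxy)] at hr
          have hxP : x ∈ Pts := by
            by_contra hx
            have := G.pairbound_eta v x y K hη.le hK (Or.inl (hPtsmem x hx))
            rw [← hdiff x y] at this
            linarith
          have hyP : y ∈ Pts := by
            by_contra hy
            have := G.pairbound_eta v x y K hη.le hK (Or.inr (hPtsmem y hy))
            rw [← hdiff x y] at this
            linarith
          exact ⟨(x, y), Set.mk_mem_prod hxP hyP, rfl⟩
        set QBig : Set ℝ := {r | r ∈ Qs T ∧ ‖v‖ + η < r} with hQBdef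
        have hQBfin : QBig.Finite := by
          refine Set.Finite.subset (Set.Finite.image (fun p : M × M => |T p.1 - T p.2| / dist p.1 p.2) (hPtsFin.prod hPtsFin)) ?_
          rintro r ⟨hr1, hr2⟩
          exact hclaim r hr1 hr2
        have hQBne : QBig.Nonempty := by
          by_contra hne
          rw [Set.not_nonempty_iff_eq_empty] at hne
          have hub : ∀ r ∈ Qs T, r ≤ ‖v‖ + η := by
            intro r hr
            by_contra hc
            push_neg at hc
            have hmem : r ∈ QBig := ⟨hr, hc⟩
            rw [hne] at hmem
            exact hmem
          have h1 : L ≤ ‖v‖ + η := csSup_le (Qs_nonempty T) hub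
          have h2 : η = (L - ‖v‖) / 2 := hetadef
          linarith
        obtain ⟨rm, hrmem, hrmax⟩ := hQBfin.exists_maximalFor id QBig hQBne
        have hrmax' : ∀ r ∈ QBig, r ≤ rm := fun r hr =>
          le_of_not_gt fun hlt => absurd (hrmax hr hlt.le) (not_le.2 hlt)
        obtain ⟨hrmQ, hrmbig⟩ := hrmem
        have hLrm : L = rm := by
          refine le_antisymm ?_ (le_csSup ⟨2 * ‖v‖, Qs_ub hlip2⟩ hrmQ)
          refine csSup_le (Qs_nonempty T) (fun r hr => ?_)
          by_cases hc : ‖v‖ + η < r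
          · exact hrmax' r ⟨hr, hc⟩
          · push_neg at hc
            linarith
        obtain ⟨x, y, hxy, hreq⟩ := hrmQ
        exact attains_of hxy (by rw [← hreq, ← hLrm])
end gadgetmain

section inst
variable {M : Type*} [MetricSpace M]

lemma max_ne_zero_iff {a : ℝ} : max 0 a ≠ 0 ↔ 0 < a := by
  constructor
  · intro h
    rcases le_or_gt a 0 with hle | hlt
    · exact absurd (max_eq_left hle) h
    · exact hlt
  · intro h
    rw [max_eq_right h.le]
    exact ne_of_gt h

/-- The bump-pair gadget: pairs `(X n, Y n)` with
`dist (X n) (Y n) + dist (X m) (Y m) ≤ dist (X n) (X m)`. -/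
noncomputable def gadgetOfBump (X Y : ℕ → M) (h1 : ∀ n, X n ≠ Y n)
    (h2 : ∀ n m, n ≠ m → dist (X n) (Y n) + dist (X m) (Y m) ≤ dist (X n) (X m)) :
    Gadget M where
  f := fun n u => max 0 (dist (X n) (Y n) - dist u (X n))
  P := X
  Q := Y
  uniq := by
    intro x n m hn hm
    by_contra hnm
    rw [max_ne_zero_iff, sub_pos] at hn hm
    have h3 := h2 n m hnm
    have h4 := dist_triangle (X n) x (X m)
    rw [dist_comm (X n) x] at h4
    linarith
  lip1 := by
    intro n x y
    have h0 : |(dist (X n) (Y n) - dist x (X n)) - (dist (X n) (Y n) - dist y (X n))|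
        ≤ dist x y := by
      have := abs_dist_sub_le x y (X n)
      rw [show dist (X n) (Y n) - dist x (X n) - (dist (X n) (Y n) - dist y (X n))
        = dist y (X n) - dist x (X n) by ring, abs_sub_comm]
      exact this
    calc |max 0 (dist (X n) (Y n) - dist x (X n)) - max 0 (dist (X n) (Y n) - dist y (X n))|
        ≤ |(dist (X n) (Y n) - dist x (X n)) - (dist (X n) (Y n) - dist y (X n))| := by
          rw [max_comm 0 _, max_comm 0 _]
          exact abs_max_sub_max_le_abs _ _ _
      _ ≤ dist x y := h0
  van := by
    intro n x y hy
    rcases le_or_gt (dist (X n) (Y n)) (dist x (X n)) with hx | hx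
    · rw [max_eq_left (by linarith)]
      simpa using dist_nonneg
    · have hy' : dist (X n) (Y n) ≤ dist y (X n) := by
        by_contra hc
        push_neg at hc
        rw [max_eq_right (by linarith : (0:ℝ) ≤ dist (X n) (Y n) - dist y (X n))] at hy
        linarith
      rw [abs_of_nonneg (le_max_left 0 _), max_eq_right (by linarith)]
      have ht := dist_triangle y x (X n)
      have hc := dist_comm y x
      linarith
  hPQ := h1
  desig := by
    intro n
    rw [dist_self, sub_zero, dist_comm (Y n) (X n), sub_self]
    rw [max_eq_right dist_nonneg, max_eq_right le_rfl, sub_zero]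
  Pact := by
    intro n
    rw [dist_self, sub_zero, max_ne_zero_iff]
    exact dist_pos.2 (h1 n)
  Qother := by
    intro n m hnm
    have h3 := h2 m n (fun he => hnm he.symm)
    have h5 := dist_triangle (X m) (Y n) (X n)
    have e2 := dist_comm (Y n) (X n)
    have e1 := dist_comm (X n) (Y n)
    have e3 := dist_comm (Y n) (X m)
    rw [max_eq_left (by linarith)]
  Pother := by
    intro n m hnm
    have h3 := h2 m n (fun he => hnm he.symm)
    have hd : 0 < dist (X n) (Y n) := dist_pos.2 (h1 n)
    have e1 := dist_comm (X n) (X m)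
    rw [max_eq_left (by linarith)]
  fin := by
    left
    intro n m x y hnm hx hy
    rw [max_ne_zero_iff, sub_pos] at hx hy
    rw [abs_of_nonneg (le_max_left 0 _), abs_of_nonneg (le_max_left 0 _),
      max_eq_right (by linarith), max_eq_right (by linarith)]
    have h3 := h2 n m hnm
    have t1 := dist_triangle (X n) x (X m)
    have t2 := dist_triangle x y (X m)
    have e1 := dist_comm (X n) x
    have e2 := dist_comm y (X m)
    linarith
end inst

section inst2
variable {M : Type*} [MetricSpace M]

open Classical in
noncomputable def molf (a b : ℕ → M) (c1 c2 : ℕ → ℝ) : ℕ → M → ℝ :=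
  fun n x => if x = a n then c1 n else if x = b n then -c2 n else 0

variable (a b : ℕ → M) (c1 c2 : ℕ → ℝ)

lemma molf_a (n : ℕ) (hab : a n ≠ b n) : molf a b c1 c2 n (a n) = c1 n := by
  rw [molf, if_pos rfl]

lemma molf_b (n : ℕ) (hab : a n ≠ b n) : molf a b c1 c2 n (b n) = -c2 n := by
  rw [molf, if_neg (fun h => hab h.symm), if_pos rfl]

lemma molf_o (n : ℕ) (x : M) (hx : x ≠ a n) (hx' : x ≠ b n) : molf a b c1 c2 n x = 0 := by
  rw [molf, if_neg hx, if_neg hx']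

/-- The discrete (two-point molecule) gadget. -/
noncomputable def gadgetOfMol
    (g1 : Function.Injective a)
    (g2 : ∀ n m, a n ≠ b m)
    (g3 : ∀ n m, n ≠ m → b n = b m → c2 n = 0)
    (g4 : ∀ n, a n ≠ b n)
    (g5 : ∀ n, 0 < c1 n)
    (g6 : ∀ n, 0 ≤ c2 n)
    (g7 : ∀ n, c1 n + c2 n = dist (a n) (b n))
    (g8 : ∀ n (u : M), u ≠ a n → c1 n ≤ dist (a n) u)
    (g9 : ∀ n (u : M), u ≠ b n → c2 n ≤ dist (b n) u) :
    Gadget M where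
  f := molf a b c1 c2
  P := a
  Q := b
  hPQ := g4
  uniq := by
    intro x n m hn hm
    by_contra hnm
    rcases em (x = a n) with h1 | h1
    · rcases em (x = a m) with h2 | h2
      · exact hnm (g1 (h1.symm.trans h2))
      · rcases em (x = b m) with h3 | h3
        · exact g2 n m (h1.symm.trans h3)
        · exact hm (molf_o a b c1 c2 m x h2 h3)
    · rcases em (x = b n) with h2 | h2
      · rcases em (x = a m) with h3 | h3
        · exact g2 m n (h3.symm.trans h2)
        · rcases em (x = b m) with h4 | h4
          · refine hm ?_
            rw [h4, molf_b a b c1 c2 m (g4 m), g3 m n (fun he => hnm he.symm)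
              (h4.symm.trans h2), neg_zero]
          · exact hm (molf_o a b c1 c2 m x h3 h4)
      · exact hn (molf_o a b c1 c2 n x h1 h2)
  lip1 := by
    have step : ∀ n (x y : M), x ≠ y →
        molf a b c1 c2 n x - molf a b c1 c2 n y ≤ dist x y := by
      intro n x y hxy
      rcases em (x = a n) with h1 | h1
      · subst h1
        rw [molf_a a b c1 c2 n (g4 n)]
        rcases em (y = b n) with h2 | h2
        · subst h2
          rw [molf_b a b c1 c2 n (g4 n), sub_neg_eq_add, g7 n]
        · rw [molf_o a b c1 c2 n y (fun h => hxy h.symm) h2, sub_zero]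
          exact g8 n y (fun h => hxy h.symm)
      · rcases em (x = b n) with h2 | h2
        · subst h2
          rw [molf_b a b c1 c2 n (g4 n)]
          have hle : -c2 n ≤ 0 := neg_nonpos.2 (g6 n)
          rcases em (y = a n) with h3 | h3
          · subst h3
            rw [molf_a a b c1 c2 n (g4 n)]
            have := (g5 n).le
            have : (0:ℝ) ≤ dist (b n) (a n) := dist_nonneg
            linarith
          · rcases em (y = b n) with h4 | h4
            · exact absurd h4.symm hxy
            · rw [molf_o a b c1 c2 n y h3 h4, sub_zero]
              exact le_trans hle dist_nonneg
        · rw [molf_o a b c1 c2 n x h1 h2, zero_sub]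
          rcases em (y = a n) with h3 | h3
          · have := (g5 n).le
            have : (0:ℝ) ≤ dist x y := dist_nonneg
            subst h3
            rw [molf_a a b c1 c2 n (g4 n)]
            linarith
          · rcases em (y = b n) with h4 | h4
            · subst h4
              rw [molf_b a b c1 c2 n (g4 n), neg_neg, dist_comm]
              exact g9 n x h2
            · rw [molf_o a b c1 c2 n y h3 h4, neg_zero]
              exact dist_nonneg
    intro n x y
    rcases em (x = y) with rfl | hxy
    · simp
    · rw [abs_sub_le_iff]
      refine ⟨step n x y hxy, ?_⟩
      rw [dist_comm] at *
      exact step n y x (fun h => hxy h.symm)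
  van := by
    intro n x y hy
    rcases em (x = a n) with h1 | h1
    · subst h1
      rw [molf_a a b c1 c2 n (g4 n), abs_of_nonneg (g5 n).le]
      refine g8 n y (fun h => ?_)
      rw [h, molf_a a b c1 c2 n (g4 n)] at hy
      exact (g5 n).ne' hy
    · rcases em (x = b n) with h2 | h2
      · subst h2
        rw [molf_b a b c1 c2 n (g4 n), abs_neg, abs_of_nonneg (g6 n)]
        rcases em (c2 n = 0) with h0 | h0
        · rw [h0]
          exact dist_nonneg
        · refine g9 n y (fun h => ?_)
          rw [h, molf_b a b c1 c2 n (g4 n)] at hy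
          exact h0 (by linarith [hy])
      · rw [molf_o a b c1 c2 n x h1 h2, abs_zero]
        exact dist_nonneg
  desig := by
    intro n
    rw [molf_a a b c1 c2 n (g4 n), molf_b a b c1 c2 n (g4 n), sub_neg_eq_add, g7 n]
  Pact := by
    intro n
    rw [molf_a a b c1 c2 n (g4 n)]
    exact (g5 n).ne'
  Qother := by
    intro n m hnm
    have h1 : b n ≠ a m := fun h => g2 m n h.symm
    rcases em (b n = b m) with h2 | h2
    · rw [molf, if_neg h1, if_pos h2, g3 m n (fun he => hnm he.symm) (h2.symm ▸ rfl), neg_zero]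
    · exact molf_o a b c1 c2 m (b n) h1 h2
  Pother := by
    intro n m hnm
    exact molf_o a b c1 c2 m (a n) (fun h => hnm (g1 h)) (g2 n m)
  fin := by
    right
    intro n
    refine Set.Finite.subset ((Set.finite_singleton (b n)).insert (a n)) ?_
    intro x hx
    rcases em (x = a n) with h1 | h1
    · exact Or.inl h1
    · rcases em (x = b n) with h2 | h2
      · exact Or.inr h2
      · exact absurd (molf_o a b c1 c2 n x h1 h2) hx
end inst2

section nnd
variable {M : Type*} [MetricSpace M]

noncomputable def nnd (x : M) : ℝ := Metric.infDist x {y | y ≠ x}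

variable [Nontrivial M]

lemma nnd_set_nonempty (x : M) : {y : M | y ≠ x}.Nonempty := by
  obtain ⟨u, hu⟩ := exists_ne x
  exact ⟨u, hu⟩

lemma nnd_nonneg (x : M) : 0 ≤ nnd x := Metric.infDist_nonneg

lemma nnd_le_dist {x u : M} (h : u ≠ x) : nnd x ≤ dist x u :=
  Metric.infDist_le_dist_of_mem (show u ∈ {y : M | y ≠ x} from h)

lemma nnd_exists_lt {x : M} {b : ℝ} (h : nnd x < b) : ∃ u, u ≠ x ∧ dist x u < b := by
  rw [nnd, Metric.infDist_lt_iff (nnd_set_nonempty x)] at h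
  obtain ⟨u, hu, hd⟩ := h
  exact ⟨u, hu, hd⟩

lemma le_nnd {x : M} {c : ℝ} (h : ∀ u, u ≠ x → c ≤ dist x u) : c ≤ nnd x := by
  by_contra hc
  push_neg at hc
  obtain ⟨u, hu, hd⟩ := nnd_exists_lt hc
  exact absurd (h u hu) (not_le.2 hd)

lemma nnd_dist_all {x u : M} (h : u ≠ x) : nnd x ≤ dist x u := nnd_le_dist h

end nnd

section selectdefs
variable (M : Type*) [MetricSpace M]

def HasBump : Prop :=
  ∃ X Y : ℕ → M, (∀ n, X n ≠ Y n) ∧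
    (∀ n m, n ≠ m → dist (X n) (Y n) + dist (X m) (Y m) ≤ dist (X n) (X m))

def HasMol : Prop :=
  ∃ (a b : ℕ → M) (c1 c2 : ℕ → ℝ),
    Function.Injective a ∧ (∀ n m, a n ≠ b m) ∧
    (∀ n m, n ≠ m → b n = b m → c2 n = 0) ∧ (∀ n, a n ≠ b n) ∧
    (∀ n, 0 < c1 n) ∧ (∀ n, 0 ≤ c2 n) ∧
    (∀ n, c1 n + c2 n = dist (a n) (b n)) ∧
    (∀ n (u : M), u ≠ a n → c1 n ≤ dist (a n) u) ∧
    (∀ n (u : M), u ≠ b n → c2 n ≤ dist (b n) u)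

end selectdefs

section caseA
variable {M : Type*} [MetricSpace M]

/-- Case 1a: near a cluster point there are relatively tiny pairs at all scales. -/
lemma hasBump_of_smallpairs (p : M)
    (H : ∀ ε > (0:ℝ), ∃ x y : M, x ≠ y ∧ x ≠ p ∧ dist x p < ε ∧ dist x y ≤ dist x p / 4) :
    HasBump M := by
  classical
  -- the carrier of the recursion
  let D := {q : M × M // q.1 ≠ q.2 ∧ q.1 ≠ p ∧ dist q.1 q.2 ≤ dist q.1 p / 4}
  have hD : ∀ ε > (0:ℝ), ∃ d : D, dist d.1.1 p < ε := by
    intro ε hε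
    obtain ⟨x, y, h1, h2, h3, h4⟩ := H ε hε
    exact ⟨⟨(x, y), h1, h2, h4⟩, h3⟩
  have hpos : ∀ d : D, 0 < dist d.1.1 p := fun d => dist_pos.2 d.2.2.1
  let step : D → D := fun d => (hD (dist d.1.1 p / 4) (by linarith [hpos d])).choose
  have hstep : ∀ d : D, dist (step d).1.1 p < dist d.1.1 p / 4 := fun d =>
    (hD (dist d.1.1 p / 4) (by linarith [hpos d])).choose_spec
  let seq : ℕ → D := fun n => Nat.rec (hD 1 one_pos).choose (fun _ d => step d) n
  have hseq : ∀ n, seq (n + 1) = step (seq n) := fun n => rfl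
  have hdec : ∀ n, dist (seq (n + 1)).1.1 p < dist (seq n).1.1 p / 4 := fun n => by
    rw [hseq]; exact hstep (seq n)
  have hmono : ∀ n m, n < m → dist (seq m).1.1 p ≤ dist (seq n).1.1 p / 4 := by
    intro n m hnm
    induction m with
    | zero => omega
    | succ k ih =>
      rcases Nat.lt_succ_iff_lt_or_eq.1 hnm with h | h
      · have h1 := ih h
        have h2 := hdec k
        have h3 := hpos (seq (k+1))
        linarith
      · subst h
        exact (hdec n).le
  refine ⟨fun n => (seq n).1.1, fun n => (seq n).1.2, fun n => (seq n).2.1, ?_⟩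
  intro n m hnm
  have key : ∀ a c : ℕ, a < c →
      dist (seq a).1.1 (seq a).1.2 + dist (seq c).1.1 (seq c).1.2
        ≤ dist (seq a).1.1 (seq c).1.1 := by
    intro a c hac
    have h1 := (seq a).2.2.2
    have h2 := (seq c).2.2.2
    have h3 := hmono a c hac
    have h4 := dist_triangle (seq a).1.1 (seq a).1.1 p  -- dummy
    have h5 := dist_triangle (seq a).1.1 (seq c).1.1 p
    have h6 := dist_nonneg (x := (seq c).1.1) (y := p)
    have h7 := hpos (seq a)
    -- dist a p ≤ dist a c + dist c p
    linarith
  rcases lt_or_gt_of_ne hnm with h | h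
  · exact key n m h
  · have := key m n h
    rw [dist_comm ((seq m).1.1) ((seq n).1.1)] at this
    linarith
end caseA

section caseB
variable {M : Type*} [MetricSpace M] [Nontrivial M]

/-- Validity of a single molecule gadget `(x, bb, u1, u2)` in case 1b, near `p`. -/
def ValidB (p : M) (ε : ℝ) (g : M × M × ℝ × ℝ) : Prop :=
  g.1 ≠ p ∧ dist g.1 p < ε / 3 ∧ g.1 ≠ g.2.1 ∧ 0 < g.2.2.1 ∧ 0 ≤ g.2.2.2 ∧
  g.2.2.1 + g.2.2.2 = dist g.1 g.2.1 ∧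
  (∀ u, u ≠ g.1 → g.2.2.1 ≤ dist g.1 u) ∧
  (∀ u, u ≠ g.2.1 → g.2.2.2 ≤ dist g.2.1 u) ∧
  dist g.1 g.2.1 ≤ 2 * dist g.1 p ∧ (g.2.1 = p → g.2.2.2 = 0)

/-- Case 1b, per-point gadget. -/
lemma exists_gadget_near (p : M) {ε : ℝ} (hε : 0 < ε)
    (hb : ∀ x, x ≠ p → dist x p < ε → ∀ y, y ≠ x → dist x p / 4 < dist x y)
    (x : M) (hx : x ≠ p) (hxs : dist x p < ε / 3) :
    ∃ g : M × M × ℝ × ℝ, g.1 = x ∧ ValidB p ε g := by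
  set s := dist x p with hsdef
  have hs : 0 < s := dist_pos.2 hx
  set R := nnd x with hRdef
  have hR1 : R ≤ s := nnd_le_dist (fun h => hx h.symm) |>.trans_eq rfl
  have hR2 : s / 4 ≤ R := le_nnd (fun u hu => (hb x hx (by linarith) u hu).le)
  have hRpos : 0 < R := by linarith
  by_cases hRs : R = s
  · -- hub gadget with mate p
    refine ⟨(x, p, s, 0), rfl, ?_⟩
    unfold ValidB
    dsimp only
    refine ⟨hx, hxs, hx, hs, le_rfl, by rw [add_zero], ?_, fun u _ => dist_nonneg, ?_,
      fun _ => rfl⟩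
    · intro u hu
      calc s = R := hRs.symm
        _ ≤ dist x u := nnd_le_dist hu
    · have h0 : (0:ℝ) ≤ dist x p := dist_nonneg
      linarith
  · have hRs' : R < s := lt_of_le_of_ne hR1 hRs
    set κ := max 1 (5 * R / (s - R) + 1) with hκdef
    have hκ1 : (1:ℝ) ≤ κ := le_max_left _ _
    have hκpos : (0:ℝ) < κ := by linarith
    have hκ5 : 5 * R / (s - R) < κ := lt_of_lt_of_le (lt_add_one _) (le_max_right _ _)
    have hsR : 0 < s - R := by linarith
    have hκ5' : 5 * R < κ * (s - R) := by
      rw [div_lt_iff₀ hsR] at hκ5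
      linarith
    have hsmall : R + R / κ < s := by
      have h1 : R / κ < s - R := by
        rw [div_lt_iff₀ hκpos]
        nlinarith
      linarith
    -- find a good mate
    have hgood : ∃ u, u ≠ x ∧ dist x u < R + R / κ ∧ R / κ ≤ nnd u := by
      by_contra hcl
      push_neg at hcl
      have hlt : nnd x < R + R / κ := by
        have : 0 < R / κ := by positivity
        linarith
      obtain ⟨u, hu, hud⟩ := nnd_exists_lt hlt
      have hnu : nnd u < R / κ := hcl u hu hud
      have hup : u ≠ p := by
        intro h
        rw [h, ← hsdef] at hud
        linarith
      have hupd : dist u p < ε := by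
        have := dist_triangle u x p
        have hxu := dist_comm x u
        have hRk : R / κ ≤ R := by
          rw [div_le_iff₀ hκpos]
          nlinarith
        have : dist u p ≤ dist u x + s := dist_triangle u x p
        linarith
      have hnub : dist u p / 4 ≤ nnd u :=
        le_nnd (fun w hw => (hb u hup hupd w hw).le)
      have hupd4 : dist u p < 4 * (R / κ) := by linarith
      have hxud : s - 4 * (R / κ) ≤ dist x u := by
        have := dist_triangle x u p
        linarith [dist_comm u p]
      have h6 : s - R < 5 * R / κ := by
        have h7 : 5 * (R / κ) = 5 * R / κ := by ring
        linarith [h7]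
      rw [lt_div_iff₀ hκpos] at h6
      nlinarith
    obtain ⟨u, hu, hud, hnu⟩ := hgood
    have hρpos : 0 < dist x u := dist_pos.2 (fun h => hu h.symm)
    have hup : u ≠ p := by
      intro h
      rw [h, ← hsdef] at hud
      linarith
    refine ⟨(x, u, min R (dist x u), dist x u - min R (dist x u)), rfl, ?_⟩
    unfold ValidB
    dsimp only
    have hRk : R / κ ≤ R := by
      rw [div_le_iff₀ hκpos]
      nlinarith
    refine ⟨hx, hxs, fun h => hu h.symm, lt_min hRpos hρpos,
      by simp [min_le_right R (dist x u)], by ring, ?_, ?_, ?_, fun h => absurd h hup⟩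
    · intro w hw
      calc min R (dist x u) ≤ R := min_le_left _ _
        _ ≤ dist x w := nnd_le_dist hw
    · intro w hw
      rcases le_total R (dist x u) with h | h
      · rw [min_eq_left h]
        calc dist x u - R ≤ R / κ := by linarith
          _ ≤ nnd u := hnu
          _ ≤ dist u w := nnd_le_dist hw
      · rw [min_eq_right h]
        simpa using dist_nonneg (x := u) (y := w)
    · calc dist x u ≤ R + R / κ := hud.le
        _ ≤ 2 * R := by linarith
        _ ≤ 2 * s := by linarith
end caseB

section caseB2
variable {M : Type*} [MetricSpace M] [Nontrivial M]

open Classical in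
noncomputable def mvalB (p : M) (g : M × M × ℝ × ℝ) : ℝ :=
  if g.2.1 = p then dist g.1 p else min (dist g.1 p) (dist g.2.1 p)

lemma mvalB_pos {p : M} {ε : ℝ} {g : M × M × ℝ × ℝ} (h : ValidB p ε g) : 0 < mvalB p g := by
  obtain ⟨h1, _, _⟩ := h
  rw [mvalB]
  split_ifs with hb
  · exact dist_pos.2 h1
  · exact lt_min (dist_pos.2 h1) (dist_pos.2 hb)

lemma mvalB_le_A (p : M) (g : M × M × ℝ × ℝ) : mvalB p g ≤ dist g.1 p := by
  rw [mvalB]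
  split_ifs with hb
  · exact le_rfl
  · exact min_le_left _ _

lemma mvalB_le_B (p : M) (g : M × M × ℝ × ℝ) (hb : g.2.1 ≠ p) :
    mvalB p g ≤ dist g.2.1 p := by
  rw [mvalB, if_neg hb]
  exact min_le_right _ _

lemma hasMol_of_cluster_isolated (p : M) {ε : ℝ} (hε : 0 < ε)
    (hp : ∀ δ > (0:ℝ), ∃ x, x ≠ p ∧ dist x p < δ)
    (hb : ∀ x, x ≠ p → dist x p < ε → ∀ y, y ≠ x → dist x p / 4 < dist x y) :
    HasMol M := by
  classical
  have hex : ∀ c : ℝ, 0 < c → ∃ g : M × M × ℝ × ℝ, ValidB p ε g ∧ dist g.1 p < c := by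
    intro c hc
    obtain ⟨x, hx, hxd⟩ := hp (min (ε / 3) c) (lt_min (by linarith) hc)
    obtain ⟨g, hg1, hg2⟩ := exists_gadget_near p hε hb x hx
      (lt_of_lt_of_le hxd (min_le_left _ _))
    exact ⟨g, hg2, by rw [hg1]; exact lt_of_lt_of_le hxd (min_le_right _ _)⟩
  choose gof hval hdist using hex
  set D := {d : (M × M × ℝ × ℝ) × ℝ // ValidB p ε d.1 ∧ 0 < d.2 ∧ d.2 ≤ mvalB p d.1}
    with hDdef
  have d0 : D := by
    refine ⟨(gof 1 one_pos, mvalB p (gof 1 one_pos)), hval 1 one_pos, ?_, le_rfl⟩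
    exact mvalB_pos (hval 1 one_pos)
  let step : D → D := fun d =>
    ⟨(gof (d.val.2 / 10) (by have := d.prop.2.1; positivity),
       min d.val.2 (mvalB p (gof (d.val.2 / 10) (by have := d.prop.2.1; positivity)))),
     hval _ _,
     lt_min d.prop.2.1 (mvalB_pos (hval _ _)),
     min_le_right _ _⟩
  have hstepd : ∀ d : D, dist (step d).val.1.1 p < d.val.2 / 10 := fun d => hdist _ _
  have hstepc : ∀ d : D, (step d).val.2 ≤ d.val.2 := fun d => min_le_left _ _
  let seq : ℕ → D := fun n => Nat.rec d0 (fun _ d => step d) n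
  have hs : ∀ n, seq (n + 1) = step (seq n) := fun n => rfl
  set A : ℕ → M := fun n => (seq n).val.1.1 with hA
  set B : ℕ → M := fun n => (seq n).val.1.2.1 with hB
  set C1 : ℕ → ℝ := fun n => (seq n).val.1.2.2.1 with hC1
  set C2 : ℕ → ℝ := fun n => (seq n).val.1.2.2.2 with hC2
  set cum : ℕ → ℝ := fun n => (seq n).val.2 with hcum
  have hV : ∀ n, ValidB p ε ((seq n).val.1) := fun n => (seq n).prop.1
  have hcum_pos : ∀ n, 0 < cum n := fun n => (seq n).prop.2.1
  have hcum_le : ∀ n, cum n ≤ mvalB p ((seq n).val.1) := fun n => (seq n).prop.2.2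
  have hcum_anti : ∀ n m, n ≤ m → cum m ≤ cum n := by
    intro n m hnm
    induction m, hnm using Nat.le_induction with
    | base => exact le_rfl
    | succ k hk ih => exact le_trans (hstepc (seq k)) ih
  have hkey : ∀ m n, m < n → dist (A n) p < mvalB p ((seq m).val.1) / 10 := by
    intro m n hmn
    obtain ⟨k, rfl⟩ : ∃ k, n = k + 1 := ⟨n - 1, by omega⟩
    have h1 : dist (A (k + 1)) p < cum k / 10 := hstepd (seq k)
    have h2 : cum k ≤ cum m := hcum_anti m k (by omega)
    have h3 : cum m ≤ mvalB p ((seq m).val.1) := hcum_le m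
    linarith
  have hVa : ∀ n, A n ≠ p := fun n => (hV n).1
  have hVb : ∀ n, A n ≠ B n := fun n => (hV n).2.2.1
  have hVc1 : ∀ n, 0 < C1 n := fun n => (hV n).2.2.2.1
  have hVc2 : ∀ n, 0 ≤ C2 n := fun n => (hV n).2.2.2.2.1
  have hVsum : ∀ n, C1 n + C2 n = dist (A n) (B n) := fun n => (hV n).2.2.2.2.2.1
  have hVg8 : ∀ n u, u ≠ A n → C1 n ≤ dist (A n) u := fun n => (hV n).2.2.2.2.2.2.1
  have hVg9 : ∀ n u, u ≠ B n → C2 n ≤ dist (B n) u := fun n => (hV n).2.2.2.2.2.2.2.1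
  have hV2s : ∀ n, dist (A n) (B n) ≤ 2 * dist (A n) p := fun n =>
    (hV n).2.2.2.2.2.2.2.2.1
  have hVbp : ∀ n, B n = p → C2 n = 0 := fun n => (hV n).2.2.2.2.2.2.2.2.2
  have hsA : ∀ n, 0 < dist (A n) p := fun n => dist_pos.2 (hVa n)
  have hBp3 : ∀ n, dist (B n) p ≤ 3 * dist (A n) p := by
    intro n
    have h1 := dist_triangle (B n) (A n) p
    have h2 := dist_comm (A n) (B n)
    have h3 := hV2s n
    linarith
  have hAlt : ∀ m n, m < n → dist (A n) p < dist (A m) p / 10 := by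
    intro m n h
    have := hkey m n h
    have := mvalB_le_A p ((seq m).val.1)
    linarith
  have hBlt : ∀ m n, m < n → B m ≠ p → dist (A n) p < dist (B m) p / 10 := by
    intro m n h hb'
    have := hkey m n h
    have := mvalB_le_B p ((seq m).val.1) hb'
    linarith
  refine ⟨A, B, C1, C2, ?_, ?_, ?_, hVb, hVc1, hVc2, hVsum, hVg8, hVg9⟩
  · -- injectivity of A
    intro n m h
    by_contra hnm
    rcases lt_or_gt_of_ne hnm with hlt | hlt
    · have := hAlt n m hlt
      rw [h] at *
      have := hsA m
      linarith
    · have := hAlt m n hlt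
      rw [h] at *
      have := hsA m
      linarith
  · -- A n ≠ B m
    intro n m h
    rcases lt_trichotomy n m with hlt | heq | hlt
    · have h1 : B m ≠ p := by rw [← h]; exact hVa n
      have h2 := hBp3 m
      have h3 := hAlt n m hlt
      have h4 : dist (B m) p = dist (A n) p := by rw [h]
      have := hsA n
      linarith
    · subst heq
      exact hVb n h
    · by_cases hbp : B m = p
      · exact hVa n (h.trans hbp)
      · have h3 := hBlt m n hlt hbp
        have h4 : dist (A n) p = dist (B m) p := by rw [h]
        have h5 : 0 < dist (B m) p := dist_pos.2 hbp
        linarith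
  · -- b-collisions force zero charge
    intro n m hnm h
    by_cases hBn : B n = p
    · exact hVbp n hBn
    · exfalso
      have hBm : B m ≠ p := by rw [← h]; exact hBn
      rcases lt_or_gt_of_ne hnm with hlt | hlt
      · have h1 := hBp3 m
        have h2 := hBlt n m hlt hBn
        have h3 : dist (B m) p = dist (B n) p := by rw [h]
        have h4 : 0 < dist (B n) p := dist_pos.2 hBn
        linarith
      · have h1 := hBp3 n
        have h2 := hBlt m n hlt hBm
        have h3 : dist (B m) p = dist (B n) p := by rw [h]
        have h4 : 0 < dist (B n) p := dist_pos.2 hBn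
        linarith
end caseB2

section caseC
variable {M : Type*} [MetricSpace M]

lemma concentrate {S : Set M} (hS : S.Infinite) {δ : ℝ} (hδ : 0 < δ)
    (hno : ∀ T ⊆ S, T.Infinite → ∃ x ∈ T, ∃ y ∈ T, x ≠ y ∧ dist x y < δ) :
    ∃ c, (S ∩ Metric.ball c δ).Infinite := by
  classical
  have hdom : ∃ V : Finset M, ↑V ⊆ S ∧ ∀ x ∈ S, ∃ t ∈ V, dist x t < δ := by
    by_contra hc
    push_neg at hc
    choose pick h1 h2 using hc
    set D := {V : Finset M // ↑V ⊆ S} with hD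
    let step : D → D := fun V =>
      ⟨insert (pick V.1 V.2) V.1, by
        rw [Finset.coe_insert]
        exact Set.insert_subset (h1 V.1 V.2) V.2⟩
    let seq : ℕ → D := fun n => Nat.rec ⟨∅, by simp⟩ (fun _ V => step V) n
    set t : ℕ → M := fun n => pick (seq n).1 (seq n).2 with ht
    have hmem : ∀ n, t n ∈ (seq (n + 1)).1 := fun n => Finset.mem_insert_self _ _
    have hmono : ∀ n m, n ≤ m → (seq n).1 ⊆ (seq m).1 := by
      intro n m hnm
      induction m, hnm using Nat.le_induction with
      | base => exact subset_rfl
      | succ k hk ih => exact ih.trans (Finset.subset_insert _ _)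
    have hsep : ∀ n m, n < m → δ ≤ dist (t m) (t n) := by
      intro n m hnm
      exact h2 (seq m).1 (seq m).2 (t n) (hmono (n + 1) m hnm (hmem n))
    have hinj : Function.Injective t := by
      intro n m h
      by_contra hnm
      rcases lt_or_gt_of_ne hnm with hlt | hlt
      · have := hsep n m hlt
        rw [h] at this
        simp at this
        linarith
      · have := hsep m n hlt
        rw [h] at this
        simp at this
        linarith
    have hTS : Set.range t ⊆ S := by
      rintro x ⟨n, rfl⟩
      exact h1 _ _
    obtain ⟨x, hx, y, hy, hxy, hd⟩ :=
      hno (Set.range t) hTS (Set.infinite_range_of_injective hinj)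
    obtain ⟨i, rfl⟩ := hx
    obtain ⟨j, rfl⟩ := hy
    have hij : i ≠ j := fun h => hxy (by rw [h])
    rcases lt_or_gt_of_ne hij with hlt | hlt
    · have := hsep i j hlt
      rw [dist_comm] at hd
      linarith
    · have := hsep j i hlt
      linarith
  obtain ⟨V, hVS, hVdom⟩ := hdom
  by_contra hcc
  push_neg at hcc
  refine hS ?_
  refine Set.Finite.subset (Set.Finite.biUnion V.finite_toSet
    (fun t _ => hcc t)) ?_
  intro x hx
  obtain ⟨t, htV, htd⟩ := hVdom x hx
  exact Set.mem_biUnion htV ⟨hx, Metric.mem_ball.2 htd⟩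

lemma cluster_or_separated [CompleteSpace M] {S : Set M} (hS : S.Infinite) :
    (∃ q : M, ∀ δ > (0:ℝ), ∃ x, x ≠ q ∧ dist x q < δ) ∨
    (∃ δ > (0:ℝ), ∃ T ⊆ S, T.Infinite ∧ ∀ x ∈ T, ∀ y ∈ T, x ≠ y → δ ≤ dist x y) := by
  classical
  by_cases hsep : ∃ δ > (0:ℝ), ∃ T ⊆ S, T.Infinite ∧ ∀ x ∈ T, ∀ y ∈ T, x ≠ y → δ ≤ dist x y
  · exact Or.inr hsep
  · left
    push_neg at hsep
    have hno : ∀ (δ : ℝ), 0 < δ → ∀ T ⊆ S, T.Infinite →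
        ∃ x ∈ T, ∃ y ∈ T, x ≠ y ∧ dist x y < δ := by
      intro δ hδ T hTS hT
      obtain ⟨x, hx, y, hy, hxy, hd⟩ := hsep δ hδ T hTS hT
      exact ⟨x, hx, y, hy, hxy, hd⟩
    have hpow : ∀ k : ℕ, (0:ℝ) < (1/2) ^ k := fun k => pow_pos (by norm_num) k
    have hconc : ∀ (k : ℕ) (U : Set M), U.Infinite → U ⊆ S →
        ∃ c, (U ∩ Metric.ball c ((1/2) ^ k)).Infinite := by
      intro k U hU hUS
      exact concentrate hU (hpow k)
        (fun T hT hTi => hno _ (hpow k) T (hT.trans hUS) hTi)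
    choose cof hcof using hconc
    set E := {U : Set M × ℕ // U.1.Infinite ∧ U.1 ⊆ S} with hE
    let step : E → E := fun U =>
      ⟨(U.1.1 ∩ Metric.ball (cof U.1.2 U.1.1 U.2.1 U.2.2) ((1/2) ^ U.1.2), U.1.2 + 1),
        hcof U.1.2 U.1.1 U.2.1 U.2.2,
        (Set.inter_subset_left).trans U.2.2⟩
    let seq : ℕ → E := fun n => Nat.rec ⟨(S, 0), hS, subset_rfl⟩ (fun _ U => step U) n
    have hidx : ∀ n, (seq n).1.2 = n := by
      intro n
      induction n with
      | zero => rfl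
      | succ k ih => show (seq k).1.2 + 1 = k + 1; rw [ih]
    have hinf : ∀ n, (seq n).1.1.Infinite := fun n => (seq n).2.1
    have hmono : ∀ n m, n ≤ m → (seq m).1.1 ⊆ (seq n).1.1 := by
      intro n m hnm
      induction m, hnm using Nat.le_induction with
      | base => exact subset_rfl
      | succ k hk ih => exact (Set.inter_subset_left).trans ih
    have hdiam : ∀ k, ∀ x ∈ (seq (k+1)).1.1, ∀ y ∈ (seq (k+1)).1.1,
        dist x y ≤ 2 * (1/2) ^ k := by
      intro k x hx y hy
      have hx' := hx.2
      have hy' := hy.2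
      rw [Metric.mem_ball] at hx' hy'
      rw [hidx k] at hx' hy'
      have h3 := dist_triangle x (cof k (seq k).1.1 ((seq k).2.1) ((seq k).2.2)) y
      have h4 := dist_comm y (cof k (seq k).1.1 ((seq k).2.1) ((seq k).2.2))
      linarith
    -- choose points and take the limit
    have hne : ∀ k, ((seq (k+1)).1.1).Nonempty := fun k => (hinf (k+1)).nonempty
    choose q hq using hne
    have hqIn : ∀ k l, k ≤ l → q l ∈ (seq (k+1)).1.1 := fun k l hkl =>
      hmono (k+1) (l+1) (by omega) (hq l)
    have hcauchy : CauchySeq q := by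
      rw [Metric.cauchySeq_iff']
      intro ε hε
      obtain ⟨N, hN⟩ := exists_pow_lt_of_lt_one (show (0:ℝ) < ε/2 by linarith)
        (show (1:ℝ)/2 < 1 by norm_num)
      refine ⟨N, fun n hn => ?_⟩
      have := hdiam N (q n) (hqIn N n hn) (q N) (hqIn N N le_rfl)
      have h2 := hpow N
      calc dist (q n) (q N) ≤ 2 * (1/2) ^ N := this
        _ < ε := by linarith
    obtain ⟨qq, hqq⟩ := cauchySeq_tendsto_of_complete hcauchy
    refine ⟨qq, fun δ hδ => ?_⟩
    obtain ⟨N, hN⟩ := exists_pow_lt_of_lt_one (show (0:ℝ) < δ/2 by linarith)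
      (show (1:ℝ)/2 < 1 by norm_num)
    have hub : ∀ u ∈ (seq (N+1)).1.1, dist u qq ≤ 2 * (1/2) ^ N := by
      intro u hu
      have hlim : Filter.Tendsto (fun l => dist u (q l)) Filter.atTop (nhds (dist u qq)) :=
        (Filter.Tendsto.dist tendsto_const_nhds hqq)
      refine le_of_tendsto hlim ?_
      filter_upwards [Filter.eventually_ge_atTop N] with l hl
      exact hdiam N u hu (q l) (hqIn N l hl)
    obtain ⟨x, hx, y, hy, hxy⟩ := (hinf (N+1)).nontrivial
    rcases em (x = qq) with rfl | hxq
    · refine ⟨y, fun h => hxy h.symm, ?_⟩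
      have := hub y hy
      linarith
    · exact ⟨x, hxq, lt_of_le_of_lt (hub x hx) (by linarith)⟩
end caseC

section case2a
variable {M : Type*} [MetricSpace M] [Nontrivial M]

lemma hasBump_of_small_nnd [CompleteSpace M]
    (hQ : ∀ q : M, 0 < nnd q) (h2a : ∀ ρ > (0:ℝ), ∃ x : M, nnd x < ρ) : HasBump M := by
  classical
  -- a sequence of points with rapidly decreasing isolation radii
  set D := {xr : M × ℝ // 0 < xr.2 ∧ nnd xr.1 < xr.2} with hD
  choose xof hxof using h2a
  let d0 : D := ⟨(xof 1 one_pos, 1), one_pos, hxof 1 one_pos⟩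
  let step : D → D := fun d =>
    ⟨(xof (min (nnd d.1.1) d.1.2 / 2) (half_pos (lt_min (hQ d.1.1) d.2.1)),
      min (nnd d.1.1) d.1.2 / 2),
      half_pos (lt_min (hQ d.1.1) d.2.1),
      hxof _ _⟩
  let seq : ℕ → D := fun n => Nat.rec d0 (fun _ d => step d) n
  set u : ℕ → M := fun n => (seq n).1.1 with hu
  set r : ℕ → ℝ := fun n => (seq n).1.2 with hr
  have hur : ∀ n, nnd (u n) < r n := fun n => (seq n).2.2
  have hrpos : ∀ n, 0 < r n := fun n => (seq n).2.1
  have hstep : ∀ n, r (n + 1) = min (nnd (u n)) (r n) / 2 := fun n => rfl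
  have hrhalf : ∀ n, r (n + 1) ≤ r n / 2 := fun n => by
    rw [hstep]
    have := min_le_right (nnd (u n)) (r n)
    linarith
  have hndec : ∀ n, nnd (u (n + 1)) < nnd (u n) / 2 := fun n => by
    have h1 := hur (n + 1)
    rw [hstep] at h1
    have := min_le_left (nnd (u n)) (r n)
    linarith
  have hr1 : r 0 = 1 := rfl
  have hrbound : ∀ n, r n ≤ (1/2) ^ n := by
    intro n
    induction n with
    | zero => simp [hr1]
    | succ k ih =>
      have h1 := hrhalf k
      have h2 : ((1:ℝ)/2) ^ (k+1) = (1/2)^k / 2 := by ring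
      rw [h2]
      linarith
  have hmono : ∀ n m, n < m → nnd (u m) < nnd (u n) := by
    intro n m hnm
    induction m, hnm using Nat.le_induction with
    | base =>
      have := hndec n
      have := hQ (u n)
      linarith
    | succ k hk ih =>
      have := hndec k
      have := hQ (u k)
      linarith
  have hinj : Function.Injective u := by
    intro n m h
    by_contra hnm
    rcases lt_or_gt_of_ne hnm with hlt | hlt
    · have := hmono n m hlt
      rw [h] at this
      linarith
    · have := hmono m n hlt
      rw [h] at this
      linarith
  rcases cluster_or_separated (Set.infinite_range_of_injective hinj) with
    ⟨q, hq⟩ | ⟨δ, hδ, T, hTS, hTinf, hTsep⟩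
  · exfalso
    obtain ⟨x, hx, hxd⟩ := hq (nnd q) (hQ q)
    rw [dist_comm] at hxd
    exact absurd (nnd_le_dist hx) (not_le.2 hxd)
  · -- extract points of `T` with tiny isolation radius
    have hTbig : {t ∈ T | δ/8 ≤ nnd t}.Finite := by
      obtain ⟨K, hK⟩ := exists_pow_lt_of_lt_one (show (0:ℝ) < δ/8 by linarith)
        (show (1:ℝ)/2 < 1 by norm_num)
      refine Set.Finite.subset (Set.Finite.image u (Set.finite_Iio K)) ?_
      rintro t ⟨htT, htn⟩
      obtain ⟨k, rfl⟩ := hTS htT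
      refine ⟨k, ?_, rfl⟩
      by_contra hk
      simp only [Set.mem_Iio, not_lt] at *
      have h1 : ((1:ℝ)/2) ^ k ≤ (1/2) ^ K :=
        pow_le_pow_of_le_one (by norm_num) (by norm_num) hk
      have h2 := hur k
      have h3 := hrbound k
      linarith
    have hTsmall : {t ∈ T | nnd t < δ/8}.Infinite := by
      have hsub : T ⊆ {t ∈ T | nnd t < δ/8} ∪ {t ∈ T | δ/8 ≤ nnd t} := by
        intro t ht
        rcases lt_or_ge (nnd t) (δ/8) with h | h
        · exact Or.inl ⟨ht, h⟩
        · exact Or.inr ⟨ht, h⟩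
      by_contra hc
      rw [Set.not_infinite] at hc
      exact hTinf (Set.Finite.subset (hc.union hTbig) hsub)
    set e := hTsmall.natEmbedding with he
    set X : ℕ → M := fun n => (e n : M) with hX
    have hXmem : ∀ n, X n ∈ {t ∈ T | nnd t < δ/8} := fun n => (e n).2
    have hXinj : Function.Injective X := fun n m h =>
      e.injective (Subtype.coe_injective h)
    have hmate : ∀ n, ∃ y, y ≠ X n ∧ dist (X n) y < δ/4 := by
      intro n
      have h1 : nnd (X n) < δ/4 := by
        have := (hXmem n).2
        linarith
      exact nnd_exists_lt h1
    choose Y hY1 hY2 using hmate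
    refine ⟨X, Y, fun n => fun h => hY1 n h.symm, ?_⟩
    intro n m hnm
    have h1 := hY2 n
    have h2 := hY2 m
    have h3 : δ ≤ dist (X n) (X m) := hTsep (X n) (hXmem n).1 (X m) (hXmem m).1
      (fun h => hnm (hXinj h))
    linarith
end case2a

section case2b
variable {M : Type*} [MetricSpace M] [Nontrivial M]

def Valid2 (g : M × M × ℝ × ℝ) : Prop :=
  g.1 ≠ g.2.1 ∧ 0 < g.2.2.1 ∧ 0 ≤ g.2.2.2 ∧ g.2.2.1 + g.2.2.2 = dist g.1 g.2.1 ∧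
  (∀ u, u ≠ g.1 → g.2.2.1 ≤ dist g.1 u) ∧ (∀ u, u ≠ g.2.1 → g.2.2.2 ≤ dist g.2.1 u)

lemma hasMol_of_unifdisc [Infinite M] {ρ0 : ℝ} (hρ : 0 < ρ0)
    (hQ : ∀ x : M, ρ0 ≤ nnd x) : HasMol M := by
  classical
  by_cases hα : ∃ w : M, {x | x ≠ w ∧ dist x w = nnd x}.Infinite
  · -- hub case
    obtain ⟨w, hw⟩ := hα
    set e := hw.natEmbedding with he
    set A : ℕ → M := fun n => (e n : M) with hA
    have hmem : ∀ n, A n ≠ w ∧ dist (A n) w = nnd (A n) := fun n => (e n).2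
    have hAinj : Function.Injective A := fun n m h =>
      e.injective (Subtype.coe_injective h)
    refine ⟨A, fun _ => w, fun n => nnd (A n), fun _ => 0, hAinj,
      fun n m => (hmem n).1, fun _ _ _ _ => rfl, fun n => (hmem n).1,
      fun n => lt_of_lt_of_le hρ (hQ (A n)), fun n => le_rfl,
      fun n => by rw [add_zero]; exact (hmem n).2.symm,
      fun n u hu => nnd_le_dist hu,
      fun n u _ => dist_nonneg⟩
  · push_neg at hα
    -- greedy extraction
    have hgreedy : ∀ U : Finset M, ∃ g : M × M × ℝ × ℝ,
        Valid2 g ∧ g.1 ∉ U ∧ g.2.1 ∉ U := by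
      intro U
      by_contra hng
      push_neg at hng
      have hclaim : ∀ x : M, x ∉ U → ∃ w ∈ U, x ≠ w ∧ dist x w = nnd x := by
        intro x hxU
        have hnx : 0 < nnd x := lt_of_lt_of_le hρ (hQ x)
        have hmate : ∀ u, u ≠ x → dist x u < nnd x + ρ0 → u ∈ U := by
          intro u hu hud
          have hdxu : 0 < dist x u := dist_pos.2 (fun h => hu h.symm)
          have hval : Valid2 (x, u, min (nnd x) (dist x u),
              dist x u - min (nnd x) (dist x u)) := by
            refine ⟨fun h => hu h.symm, lt_min hnx hdxu,
              by simp [min_le_right], by ring, ?_, ?_⟩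
            · intro v hv
              calc min (nnd x) (dist x u) ≤ nnd x := min_le_left _ _
                _ ≤ dist x v := nnd_le_dist hv
            · intro v hv
              rcases le_total (nnd x) (dist x u) with h | h
              · rw [min_eq_left h]
                calc dist x u - nnd x ≤ ρ0 := by linarith
                  _ ≤ nnd u := hQ u
                  _ ≤ dist u v := nnd_le_dist hv
              · rw [min_eq_right h]
                simpa using dist_nonneg (x := u) (y := v)
          exact hng _ hval hxU
        -- nested: an exact nearest point inside U
        set F : Set M := {u | u ≠ x ∧ dist x u < nnd x + ρ0} with hF
        have hFU : F ⊆ ↑U := fun u hu => hmate u hu.1 hu.2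
        have hFfin : F.Finite := Set.Finite.subset U.finite_toSet hFU
        have hFne : F.Nonempty := by
          obtain ⟨u, hu, hud⟩ := nnd_exists_lt (show nnd x < nnd x + ρ0 by linarith)
          exact ⟨u, hu, hud⟩
        obtain ⟨w, hwF, hwmin⟩ := Set.exists_min_image F (fun u => dist x u) hFfin hFne
        refine ⟨w, hFU hwF, fun h => hwF.1 h.symm, ?_⟩
        refine le_antisymm ?_ (nnd_le_dist hwF.1)
        by_contra hc
        push_neg at hc
        set θ := min ρ0 (dist x w - nnd x) with hθ
        have hθpos : 0 < θ := lt_min hρ (by linarith)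
        obtain ⟨u', hu', hud'⟩ := nnd_exists_lt (show nnd x < nnd x + θ by linarith)
        have hu'F : u' ∈ F := ⟨hu', lt_of_lt_of_le hud' (by
          have := min_le_left ρ0 (dist x w - nnd x)
          linarith)⟩
        have h1 := hwmin u' hu'F
        have h2 : θ ≤ dist x w - nnd x := min_le_right _ _
        linarith
      have hcompl : (↑U : Set M)ᶜ ⊆ ⋃ w ∈ U, {x | x ≠ w ∧ dist x w = nnd x} := by
        intro x hx
        obtain ⟨w, hwU, hxw, hxd⟩ := hclaim x hx
        exact Set.mem_biUnion hwU ⟨hxw, hxd⟩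
      have hinf : (↑U : Set M)ᶜ.Infinite := U.finite_toSet.infinite_compl
      exact hinf (Set.Finite.subset (Set.Finite.biUnion U.finite_toSet
        (fun w _ => hα w)) hcompl)
    choose gof hval hg1 hg2 using hgreedy
    set D := {d : (M × M × ℝ × ℝ) × Finset M //
      Valid2 d.1 ∧ d.1.1 ∉ d.2 ∧ d.1.2.1 ∉ d.2} with hD
    let d0 : D := ⟨(gof ∅, ∅), hval ∅, hg1 ∅, hg2 ∅⟩
    let step : D → D := fun d =>
      let U' := insert d.1.1.1 (insert d.1.1.2.1 d.1.2)
      ⟨(gof U', U'), hval U', hg1 U', hg2 U'⟩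
    let seq : ℕ → D := fun n => Nat.rec d0 (fun _ d => step d) n
    set A : ℕ → M := fun n => (seq n).1.1.1 with hA
    set B : ℕ → M := fun n => (seq n).1.1.2.1 with hB
    set C1 : ℕ → ℝ := fun n => (seq n).1.1.2.2.1 with hC1
    set C2 : ℕ → ℝ := fun n => (seq n).1.1.2.2.2 with hC2
    set U : ℕ → Finset M := fun n => (seq n).1.2 with hU
    have hVal : ∀ n, Valid2 ((seq n).1.1) := fun n => (seq n).2.1
    have hAU : ∀ n, A n ∉ U n := fun n => (seq n).2.2.1
    have hBU : ∀ n, B n ∉ U n := fun n => (seq n).2.2.2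
    have hUsucc : ∀ n, U (n + 1) = insert (A n) (insert (B n) (U n)) := fun n => rfl
    have hUmono : ∀ n m, n ≤ m → U n ⊆ U m := by
      intro n m hnm
      induction m, hnm using Nat.le_induction with
      | base => exact subset_rfl
      | succ k hk ih =>
        refine ih.trans ?_
        rw [hUsucc k]
        exact (Finset.subset_insert _ _).trans
          ((Finset.insert_subset_insert _ (Finset.subset_insert _ _)))
    have hAin : ∀ n m, n < m → A n ∈ U m := by
      intro n m hnm
      refine hUmono (n + 1) m hnm ?_
      rw [hUsucc n]
      exact Finset.mem_insert_self _ _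
    have hBin : ∀ n m, n < m → B n ∈ U m := by
      intro n m hnm
      refine hUmono (n + 1) m hnm ?_
      rw [hUsucc n]
      exact Finset.mem_insert_of_mem (Finset.mem_insert_self _ _)
    refine ⟨A, B, C1, C2, ?_, ?_, ?_, fun n => (hVal n).1, fun n => (hVal n).2.1,
      fun n => (hVal n).2.2.1, fun n => (hVal n).2.2.2.1, fun n => (hVal n).2.2.2.2.1,
      fun n => (hVal n).2.2.2.2.2⟩
    · intro n m h
      by_contra hnm
      rcases lt_or_gt_of_ne hnm with hlt | hlt
      · exact hAU m (h ▸ hAin n m hlt)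
      · exact hAU n (h.symm ▸ hAin m n hlt)
    · intro n m h
      rcases lt_trichotomy n m with hlt | heq | hlt
      · exact hBU m (h ▸ hAin n m hlt)
      · subst heq
        exact (hVal n).1 h
      · exact hAU n (h.symm ▸ hBin m n hlt)
    · intro n m hnm h
      exfalso
      rcases lt_or_gt_of_ne hnm with hlt | hlt
      · exact hBU m (h ▸ hBin n m hlt)
      · exact hBU n (h.symm ▸ hBin m n hlt)
end case2b

section master
variable (M : Type*) [MetricSpace M]

theorem select [CompleteSpace M] [Infinite M] : HasBump M ∨ HasMol M := by
  classical
  haveI : Nontrivial M := Infinite.instNontrivial M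
  by_cases hcl : ∃ p : M, ∀ δ > (0:ℝ), ∃ x, x ≠ p ∧ dist x p < δ
  · obtain ⟨p, hp⟩ := hcl
    by_cases h1a : ∀ ε > (0:ℝ),
        ∃ x y : M, x ≠ y ∧ x ≠ p ∧ dist x p < ε ∧ dist x y ≤ dist x p / 4
    · exact Or.inl (hasBump_of_smallpairs p h1a)
    · push_neg at h1a
      obtain ⟨ε, hε, hb0⟩ := h1a
      refine Or.inr (hasMol_of_cluster_isolated p hε hp ?_)
      intro x hx hxd y hy
      exact hb0 x y hy.symm hx hxd
  · push_neg at hcl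
    have hQ : ∀ q : M, 0 < nnd q := by
      intro q
      obtain ⟨δ, hδ, h⟩ := hcl q
      exact lt_of_lt_of_le hδ (le_nnd (fun u hu => (dist_comm q u) ▸ h u hu))
    by_cases h2a : ∀ ρ > (0:ℝ), ∃ x : M, nnd x < ρ
    · exact Or.inl (hasBump_of_small_nnd hQ h2a)
    · push_neg at h2a
      obtain ⟨ρ0, hρ0, h⟩ := h2a
      exact Or.inr (hasMol_of_unifdisc hρ0 h)
end master

/-- Main Theorem: for every infinite complete pointed metric space `M`,
`SNA(M)` contains an isomorphic copy of `c₀`: there is a linear map `T : c₀ → Lip_0(M)`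
which is an isomorphism onto its range (the Lipschitz norms of `T v` are equivalent to
`‖v‖`) and every `T v` strongly attains its Lipschitz norm. -/
theorem stmt13 {M : Type*} [MetricSpace M] [CompleteSpace M] [Infinite M] (z : M) :
    ∃ (T : C₀(ℕ, ℝ) →ₗ[ℝ] (M → ℝ)) (c C : ℝ), 0 < c ∧ 0 < C ∧
      ∀ v : C₀(ℕ, ℝ),
        T v z = 0 ∧
        IsLipWith (C * ‖v‖) (T v) ∧
        c * ‖v‖ ≤ lipNorm (T v) ∧ lipNorm (T v) ≤ C * ‖v‖ ∧
        StronglyAttains (T v) := by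
  rcases select M with ⟨X, Y, h1, h2⟩ | ⟨a, b, c1, c2, g1, g2, g3, g4, g5, g6, g7, g8, g9⟩
  · exact (gadgetOfBump X Y h1 h2).stmt z
  · exact (gadgetOfMol a b c1 c2 g1 g2 g3 g4 g5 g6 g7 g8 g9).stmt z
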